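/- Let d ≥ 1 and n ≥ 1 be integers and 0 < Δ ≤ 1 a real number. Let v_1,…,v_n and w_1,…,w_n be vectors in ℝ^d such that ‖v_i‖_∞ ≤ 1, ‖w_i‖_∞ ≤ 1, and ‖v_i − w_i‖_∞ ≤ Δ for all i. Let A and B be the n×n Gram matrices A_{i,j} = ⟨v_i, v_j⟩ and B_{i,j} = ⟨w_i, w_j⟩. Then for every subset S ⊆ {1,…,n} with |S| ≤ d, one has |det(A_S) − det(B_S)| ≤ 3 · d^{2d+1} · Δ. -/

import Mathlib

noncomputable def principalDet {ι : Type*} [DecidableEq ι] (A : Matrix ι ι ℝ) (S : Finset ι) : ℝ :=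
  (A.submatrix (fun i : S => (i : ι)) (fun j : S => (j : ι))).det

private lemma aux_prod_diff {ι : Type*} [DecidableEq ι] (M δ : ℝ) (hM : 0 ≤ M) (hδ : 0 ≤ δ)
    (s : Finset ι) : ∀ a b : ι → ℝ, (∀ i ∈ s, |a i| ≤ M) → (∀ i ∈ s, |b i| ≤ M) →
    (∀ i ∈ s, |a i - b i| ≤ δ) →
    M * |∏ i ∈ s, a i - ∏ i ∈ s, b i| ≤ (s.card : ℝ) * M ^ s.card * δ := by
  induction s using Finset.induction_on with
  | empty => intro a b _ _ _; simp
  | @insert x s hx ih =>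
    intro a b ha hb hab
    have hx' : x ∈ insert x s := Finset.mem_insert_self x s
    have ha' : ∀ i ∈ s, |a i| ≤ M := fun i hi => ha i (Finset.mem_insert_of_mem hi)
    have hb' : ∀ i ∈ s, |b i| ≤ M := fun i hi => hb i (Finset.mem_insert_of_mem hi)
    have hab' : ∀ i ∈ s, |a i - b i| ≤ δ := fun i hi => hab i (Finset.mem_insert_of_mem hi)
    have IH := ih a b ha' hb' hab'
    rw [Finset.prod_insert hx, Finset.prod_insert hx, Finset.card_insert_of_notMem hx]
    have hpb : |∏ i ∈ s, b i| ≤ M ^ s.card := by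
      rw [Finset.abs_prod]
      calc ∏ i ∈ s, |b i| ≤ ∏ _i ∈ s, M :=
            Finset.prod_le_prod (fun i _ => abs_nonneg _) (fun i hi => hb' i hi)
        _ = M ^ s.card := Finset.prod_const M
    have key : |a x * ∏ i ∈ s, a i - b x * ∏ i ∈ s, b i|
        ≤ |a x| * |∏ i ∈ s, a i - ∏ i ∈ s, b i| + |a x - b x| * |∏ i ∈ s, b i| := by
      have : a x * ∏ i ∈ s, a i - b x * ∏ i ∈ s, b i
          = a x * (∏ i ∈ s, a i - ∏ i ∈ s, b i) + (a x - b x) * ∏ i ∈ s, b i := by ring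
      rw [this]
      calc _ ≤ |a x * (∏ i ∈ s, a i - ∏ i ∈ s, b i)| + |(a x - b x) * ∏ i ∈ s, b i| :=
              abs_add_le _ _
        _ = _ := by rw [abs_mul, abs_mul]
    have h1 : M * (|a x| * |∏ i ∈ s, a i - ∏ i ∈ s, b i|)
        ≤ M * (M * |∏ i ∈ s, a i - ∏ i ∈ s, b i|) := by
      have := mul_le_mul_of_nonneg_right (ha x hx') (abs_nonneg (∏ i ∈ s, a i - ∏ i ∈ s, b i))
      nlinarith [abs_nonneg (∏ i ∈ s, a i - ∏ i ∈ s, b i)]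
    have h2 : M * (M * |∏ i ∈ s, a i - ∏ i ∈ s, b i|) ≤ M * ((s.card : ℝ) * M ^ s.card * δ) :=
      mul_le_mul_of_nonneg_left IH hM
    have h3 : M * (|a x - b x| * |∏ i ∈ s, b i|) ≤ M * (δ * M ^ s.card) := by
      have habx := hab x hx'
      have h0 : |a x - b x| * |∏ i ∈ s, b i| ≤ δ * M ^ s.card :=
        mul_le_mul habx hpb (abs_nonneg _) hδ
      exact mul_le_mul_of_nonneg_left h0 hM
    have hMpow : (0:ℝ) ≤ M ^ s.card := pow_nonneg hM _
    calc M * |a x * ∏ i ∈ s, a i - b x * ∏ i ∈ s, b i|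
        ≤ M * (|a x| * |∏ i ∈ s, a i - ∏ i ∈ s, b i| + |a x - b x| * |∏ i ∈ s, b i|) :=
          mul_le_mul_of_nonneg_left key hM
      _ = M * (|a x| * |∏ i ∈ s, a i - ∏ i ∈ s, b i|) + M * (|a x - b x| * |∏ i ∈ s, b i|) := by
          ring
      _ ≤ M * ((s.card : ℝ) * M ^ s.card * δ) + M * (δ * M ^ s.card) :=
          add_le_add (le_trans h1 h2) h3
      _ = ((s.card : ℝ) + 1) * M ^ (s.card + 1) * δ := by ring
      _ = ((s.card + 1 : ℕ) : ℝ) * M ^ (s.card + 1) * δ := by push_cast; ring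

theorem stmt_15 (d n : ℕ) (hd : 1 ≤ d) (hn : 1 ≤ n)
    (Δ : ℝ) (hΔ0 : 0 < Δ) (hΔ1 : Δ ≤ 1)
    (v w : Fin n → Fin d → ℝ)
    (hv : ∀ i e, |v i e| ≤ 1) (hw : ∀ i e, |w i e| ≤ 1)
    (hvw : ∀ i e, |v i e - w i e| ≤ Δ)
    (A B : Matrix (Fin n) (Fin n) ℝ)
    (hA : ∀ i j, A i j = ∑ e, v i e * v j e)
    (hB : ∀ i j, B i j = ∑ e, w i e * w j e) :
    ∀ S : Finset (Fin n), S.card ≤ d →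
      |principalDet A S - principalDet B S| ≤ 3 * (d : ℝ) ^ (2 * d + 1) * Δ := by
  -- entry bounds
  have hAbd : ∀ i j, |A i j| ≤ (d : ℝ) := by
    intro i j
    rw [hA]
    calc |∑ e, v i e * v j e| ≤ ∑ e, |v i e * v j e| := Finset.abs_sum_le_sum_abs _ _
      _ ≤ ∑ _e : Fin d, (1 : ℝ) := by
          apply Finset.sum_le_sum
          intro e _
          rw [abs_mul]
          calc |v i e| * |v j e| ≤ 1 * 1 := mul_le_mul (hv i e) (hv j e) (abs_nonneg _) zero_le_one
            _ = 1 := by ring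
      _ = (d : ℝ) := by simp
  have hBbd : ∀ i j, |B i j| ≤ (d : ℝ) := by
    intro i j
    rw [hB]
    calc |∑ e, w i e * w j e| ≤ ∑ e, |w i e * w j e| := Finset.abs_sum_le_sum_abs _ _
      _ ≤ ∑ _e : Fin d, (1 : ℝ) := by
          apply Finset.sum_le_sum
          intro e _
          rw [abs_mul]
          calc |w i e| * |w j e| ≤ 1 * 1 := mul_le_mul (hw i e) (hw j e) (abs_nonneg _) zero_le_one
            _ = 1 := by ring
      _ = (d : ℝ) := by simp
  have hABbd : ∀ i j, |A i j - B i j| ≤ 2 * (d : ℝ) * Δ := by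
    intro i j
    rw [hA, hB, ← Finset.sum_sub_distrib]
    calc |∑ e, (v i e * v j e - w i e * w j e)| ≤ ∑ e, |v i e * v j e - w i e * w j e| :=
          Finset.abs_sum_le_sum_abs _ _
      _ ≤ ∑ _e : Fin d, (2 * Δ) := by
          apply Finset.sum_le_sum
          intro e _
          have heq : v i e * v j e - w i e * w j e
              = v i e * (v j e - w j e) + (v i e - w i e) * w j e := by ring
          rw [heq]
          calc |v i e * (v j e - w j e) + (v i e - w i e) * w j e|
              ≤ |v i e * (v j e - w j e)| + |(v i e - w i e) * w j e| := abs_add_le _ _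
            _ = |v i e| * |v j e - w j e| + |v i e - w i e| * |w j e| := by
                rw [abs_mul, abs_mul]
            _ ≤ 1 * Δ + Δ * 1 := add_le_add
                (mul_le_mul (hv i e) (hvw j e) (abs_nonneg _) zero_le_one)
                (mul_le_mul (hvw i e) (hw j e) (abs_nonneg _) hΔ0.le)
            _ = 2 * Δ := by ring
      _ = (d : ℝ) * (2 * Δ) := by simp
      _ = 2 * (d : ℝ) * Δ := by ring
  intro S hS
  have hd0 : (0:ℝ) < (d:ℝ) := by exact_mod_cast hd
  rw [← mul_le_mul_iff_right₀ hd0]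
  set k := S.card with hk
  -- the submatrices
  set A' : Matrix S S ℝ := A.submatrix (fun i : S => (i : Fin n)) (fun j : S => (j : Fin n))
    with hA'
  set B' : Matrix S S ℝ := B.submatrix (fun i : S => (i : Fin n)) (fun j : S => (j : Fin n))
    with hB'
  have hdiff : principalDet A S - principalDet B S
      = ∑ σ : Equiv.Perm S, ((Equiv.Perm.sign σ : ℤ) : ℝ)
          * (∏ i, A' (σ i) i - ∏ i, B' (σ i) i) := by
    rw [principalDet, principalDet, Matrix.det_apply', Matrix.det_apply',
      ← Finset.sum_sub_distrib]
    apply Finset.sum_congr rfl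
    intro σ _
    ring
  have hcardS : Fintype.card S = k := Fintype.card_coe S
  have hsign : ∀ σ : Equiv.Perm S, |((Equiv.Perm.sign σ : ℤ) : ℝ)| = 1 := by
    intro σ
    rcases Int.units_eq_one_or (Equiv.Perm.sign σ) with h | h <;> rw [h] <;> norm_num
  have hterm : ∀ σ : Equiv.Perm S,
      (d:ℝ) * |∏ i, A' (σ i) i - ∏ i, B' (σ i) i|
        ≤ (k : ℝ) * (d:ℝ) ^ k * (2 * (d:ℝ) * Δ) := by
    intro σ
    have := aux_prod_diff (d:ℝ) (2 * (d:ℝ) * Δ) hd0.le (by positivity)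
      (Finset.univ : Finset S) (fun i => A' (σ i) i) (fun i => B' (σ i) i)
      (fun i _ => hAbd _ _) (fun i _ => hBbd _ _) (fun i _ => hABbd _ _)
    simpa [Finset.card_univ, hcardS] using this
  calc (d:ℝ) * |principalDet A S - principalDet B S|
      ≤ (d:ℝ) * ∑ σ : Equiv.Perm S, |∏ i, A' (σ i) i - ∏ i, B' (σ i) i| := by
        apply mul_le_mul_of_nonneg_left _ hd0.le
        rw [hdiff]
        calc |∑ σ : Equiv.Perm S, ((Equiv.Perm.sign σ : ℤ) : ℝ)
              * (∏ i, A' (σ i) i - ∏ i, B' (σ i) i)|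
            ≤ ∑ σ : Equiv.Perm S, |((Equiv.Perm.sign σ : ℤ) : ℝ)
              * (∏ i, A' (σ i) i - ∏ i, B' (σ i) i)| := Finset.abs_sum_le_sum_abs _ _
          _ = ∑ σ : Equiv.Perm S, |∏ i, A' (σ i) i - ∏ i, B' (σ i) i| := by
              apply Finset.sum_congr rfl
              intro σ _
              rw [abs_mul, hsign σ, one_mul]
    _ = ∑ σ : Equiv.Perm S, (d:ℝ) * |∏ i, A' (σ i) i - ∏ i, B' (σ i) i| := by
        rw [Finset.mul_sum]
    _ ≤ ∑ _σ : Equiv.Perm S, (k : ℝ) * (d:ℝ) ^ k * (2 * (d:ℝ) * Δ) :=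
        Finset.sum_le_sum (fun σ _ => hterm σ)
    _ = (k.factorial : ℝ) * ((k : ℝ) * (d:ℝ) ^ k * (2 * (d:ℝ) * Δ)) := by
        rw [Finset.sum_const, Finset.card_univ, Fintype.card_perm, hcardS]
        simp [nsmul_eq_mul]
    _ ≤ (d:ℝ) * (3 * (d : ℝ) ^ (2 * d + 1) * Δ) := by
        have hnat : k.factorial * (k * d ^ k * (2 * d)) ≤ d * (3 * d ^ (2 * d + 1)) := by
          have h1 : k.factorial ≤ d ^ d :=
            le_trans (Nat.factorial_le_pow k)
              (le_trans (Nat.pow_le_pow_left hS k) (Nat.pow_le_pow_right hd hS))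
          have h2 : d ^ k ≤ d ^ d := Nat.pow_le_pow_right hd hS
          calc k.factorial * (k * d ^ k * (2 * d))
              ≤ d ^ d * (d * d ^ d * (2 * d)) := by
                apply Nat.mul_le_mul h1
                apply Nat.mul_le_mul (Nat.mul_le_mul hS h2) (le_refl _)
            _ = 2 * d ^ (2 * d + 2) := by ring
            _ ≤ 3 * d ^ (2 * d + 2) := by
                apply Nat.mul_le_mul_right
                norm_num
            _ = d * (3 * d ^ (2 * d + 1)) := by ring
        have hnat' : (k.factorial * (k * d ^ k * (2 * d)) : ℝ)
            ≤ (d * (3 * d ^ (2 * d + 1)) : ℝ) := by exact_mod_cast hnat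
        have : (k.factorial : ℝ) * ((k : ℝ) * (d:ℝ) ^ k * (2 * (d:ℝ) * Δ))
            = ((k.factorial : ℝ) * ((k : ℝ) * (d:ℝ) ^ k * (2 * (d:ℝ)))) * Δ := by ring
        rw [this]
        have h4 : ((d:ℝ) * (3 * (d : ℝ) ^ (2 * d + 1) * Δ))
            = ((d:ℝ) * (3 * (d : ℝ) ^ (2 * d + 1))) * Δ := by ring
        rw [h4]
        apply mul_le_mul_of_nonneg_right _ hΔ0.le
        push_cast at hnat' ⊢
        linarith
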